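/- For all integers $m \geq 1$ and $k \geq r \geq 1$ with $k > r$, $\sum_{n=1}^{\infty} \frac{\zeta_n(m)}{(n+r)(n+k)} = \frac{1}{k-r}\left\{ \sum_{j=1}^{m-1} (-1)^{j-1}\zeta(m+1-j)\big(\zeta_{k-1}(j) - \zeta_{r-1}(j)\big) + (-1)^{m-1}\left( \sum_{i=1}^{k-1} \frac{H_i}{i^m} - \sum_{i=1}^{r-1} \frac{H_i}{i^m} \right) \right\}$. -/

import Mathlib

noncomputable def H (n : ℕ) : ℝ := ∑ j ∈ Finset.Icc 1 n, (1 : ℝ) / j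

noncomputable def zh (m n : ℕ) : ℝ := ∑ j ∈ Finset.Icc 1 n, (1 : ℝ) / (j : ℝ) ^ m

noncomputable def Z (s : ℕ) : ℝ := ∑' n : ℕ, 1 / ((n : ℝ) + 1) ^ s

open Filter Finset


lemma zh_zero (m : ℕ) : zh m 0 = 0 := by simp [zh]

lemma zh_succ (m n : ℕ) : zh m (n + 1) = zh m n + 1 / ((n : ℝ) + 1) ^ m := by
  rw [zh, Finset.sum_Icc_succ_top (by omega)]
  push_cast [zh]
  ring

lemma zh_nonneg (m n : ℕ) : 0 ≤ zh m n := by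
  apply Finset.sum_nonneg; intro j _; positivity

lemma zh_le_sqrt (m : ℕ) (hm : 1 ≤ m) : ∀ n : ℕ, zh m n ≤ 2 * Real.sqrt n := by
  intro n
  induction n with
  | zero => simp [zh_zero]
  | succ n ih =>
    rw [zh_succ]
    have h1 : (1:ℝ) / ((n : ℝ) + 1) ^ m ≤ 1 / ((n : ℝ) + 1) := by
      apply one_div_le_one_div_of_le (by positivity)
      calc ((n:ℝ)+1) = ((n:ℝ)+1)^1 := (pow_one _).symm
        _ ≤ ((n:ℝ)+1)^m := pow_le_pow_right₀ (by linarith [Nat.cast_nonneg (α := ℝ) n]) hm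
    have hs1 : Real.sqrt n ^ 2 = n := Real.sq_sqrt (Nat.cast_nonneg n)
    have hs2 : Real.sqrt ((n:ℝ)+1) ^ 2 = (n:ℝ)+1 := Real.sq_sqrt (by positivity)
    have hs3 : 0 ≤ Real.sqrt n := Real.sqrt_nonneg _
    have hs4 : 0 ≤ Real.sqrt ((n:ℝ)+1) := Real.sqrt_nonneg _
    have hba : Real.sqrt n ≤ Real.sqrt ((n:ℝ)+1) := Real.sqrt_le_sqrt (by linarith)
    have hb1 : (1:ℝ) ≤ Real.sqrt ((n:ℝ)+1) := by
      nlinarith [hs2, hs4]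
    have key2 : 1 / ((n:ℝ)+1) ≤ 2 * (Real.sqrt ((n:ℝ)+1) - Real.sqrt n) := by
      rw [div_le_iff₀ (by positivity)]
      nlinarith [mul_nonneg (sub_nonneg.2 hba)
        (by nlinarith : (0:ℝ) ≤ 2 * Real.sqrt ((n:ℝ)+1) ^ 2 - Real.sqrt ((n:ℝ)+1) - Real.sqrt n)]
    have key : 2 * Real.sqrt n + 1 / ((n:ℝ)+1) ≤ 2 * Real.sqrt ((n:ℝ)+1) := by linarith
    push_cast
    linarith

lemma summable_base : Summable (fun n : ℕ => 1 / ((n : ℝ) + 1) ^ 2) := by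
  have := (summable_nat_add_iff (f := fun n : ℕ => 1 / (n : ℝ) ^ 2) 1).2
      (Real.summable_one_div_nat_pow.2 one_lt_two)
  simpa using this

/-- summability of 1/(n+1)^p for p ≥ 2 -/
lemma summable_pow (p : ℕ) (hp : 2 ≤ p) : Summable (fun n : ℕ => 1 / ((n : ℝ) + 1) ^ p) := by
  apply Summable.of_nonneg_of_le (fun n => by positivity) _ summable_base
  intro n
  apply one_div_le_one_div_of_le (by positivity)
  exact pow_le_pow_right₀ (by linarith [Nat.cast_nonneg (α := ℝ) n]) hp

/-- summability of 1/((n+1)^m (n+1+s)) for m ≥ 1, s ≥ 1 -/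
lemma summable_g (m : ℕ) (s : ℝ) (hm : 1 ≤ m) (hs : 1 ≤ s) :
    Summable (fun n : ℕ => 1 / (((n : ℝ) + 1) ^ m * ((n : ℝ) + 1 + s))) := by
  apply Summable.of_nonneg_of_le (fun n => by positivity) _ summable_base
  intro n
  apply one_div_le_one_div_of_le (by positivity)
  have h1 : ((n:ℝ)+1) ≤ ((n:ℝ)+1)^m :=
    le_self_pow₀ (by linarith [Nat.cast_nonneg (α := ℝ) n]) (by omega)
  have h2 : ((n:ℝ)+1) ≤ ((n:ℝ)+1+s) := by linarith
  calc ((n:ℝ)+1)^2 = ((n:ℝ)+1) * ((n:ℝ)+1) := sq _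
    _ ≤ ((n:ℝ)+1)^m * ((n:ℝ)+1+s) := by
        apply mul_le_mul h1 h2 (by positivity) (by positivity)

/-- telescoping tsum -/
lemma tsum_telescope (f : ℕ → ℝ) (h0 : Tendsto f atTop (nhds 0))
    (hs : Summable fun n => f n - f (n + 1)) : ∑' n, (f n - f (n + 1)) = f 0 := by
  have h1 := hs.hasSum.tendsto_sum_nat
  have h2 : Tendsto (fun N => ∑ i ∈ Finset.range N, (f i - f (i + 1))) atTop (nhds (f 0)) := by
    simp only [Finset.sum_range_sub']
    simpa using tendsto_const_nhds.sub h0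
  exact tendsto_nhds_unique h1 h2

lemma summable_tele (i : ℕ) :
    Summable (fun n : ℕ => 1 / ((n : ℝ) + 1 + i) - 1 / ((n : ℝ) + 1 + (i + 1))) := by
  apply Summable.of_nonneg_of_le _ _ summable_base
  · intro n
    have h2 : (0:ℝ) < (n:ℝ)+1+i := by positivity
    simp only [sub_nonneg]
    exact one_div_le_one_div_of_le h2 (by push_cast; linarith)
  · intro n
    have h2 : (0:ℝ) < (n:ℝ)+1+i := by positivity
    have h3 : (0:ℝ) < (n:ℝ)+1+((i:ℝ)+1) := by positivity
    have key : 1/((n:ℝ)+1+i) - 1/((n:ℝ)+1+((i:ℝ)+1))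
        = 1/(((n:ℝ)+1+i)*((n:ℝ)+1+((i:ℝ)+1))) := by
      field_simp
      ring
    push_cast
    rw [key]
    apply one_div_le_one_div_of_le (by positivity)
    nlinarith [Nat.cast_nonneg (α := ℝ) n, Nat.cast_nonneg (α := ℝ) i]

lemma tele_eval (i : ℕ) :
    ∑' n : ℕ, (1 / ((n : ℝ) + 1 + i) - 1 / ((n : ℝ) + 1 + (i + 1))) = 1 / ((i : ℝ) + 1) := by
  set f : ℕ → ℝ := fun n => 1 / ((n : ℝ) + 1 + i) with hf
  have heq : ∀ n : ℕ, 1 / ((n : ℝ) + 1 + ((i : ℝ) + 1)) = f (n + 1) := by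
    intro n; simp only [hf]; push_cast; ring_nf
  have htend : Filter.Tendsto f Filter.atTop (nhds 0) := by
    have h1 : Filter.Tendsto (fun n : ℕ => (n:ℝ)+1+i) Filter.atTop Filter.atTop :=
      tendsto_atTop_add_const_right _ _
        (tendsto_atTop_add_const_right _ _ tendsto_natCast_atTop_atTop)
    simp only [hf, one_div]; exact h1.inv_tendsto_atTop
  have hsum : Summable (fun n => f n - f (n + 1)) := by
    apply (summable_tele i).congr
    intro n
    rw [← heq]
  calc ∑' n : ℕ, (1 / ((n : ℝ) + 1 + i) - 1 / ((n : ℝ) + 1 + (i + 1)))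
      = ∑' n : ℕ, (f n - f (n + 1)) := by
        apply tsum_congr; intro n; rw [← heq]
    _ = f 0 := tsum_telescope f htend hsum
    _ = 1 / ((i : ℝ) + 1) := by simp [hf]; ring_nf
lemma H_succ (n : ℕ) : H (n + 1) = H n + 1 / ((n : ℝ) + 1) := by
  rw [H, Finset.sum_Icc_succ_top (by omega)]
  push_cast [H]
  ring

lemma summable_diff (s : ℕ) :
    Summable (fun n : ℕ => 1 / ((n : ℝ) + 1) - 1 / ((n : ℝ) + 1 + s)) := by
  induction s with
  | zero => simpa using summable_zero
  | succ s ih =>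
    have := ih.add (summable_tele s)
    apply this.congr
    intro n
    push_cast
    ring

lemma tsum_diff_H (s : ℕ) :
    ∑' n : ℕ, (1 / ((n : ℝ) + 1) - 1 / ((n : ℝ) + 1 + s)) = H s := by
  induction s with
  | zero => simp [H]
  | succ s ih =>
    have heq : ∀ n : ℕ, 1 / ((n : ℝ) + 1) - 1 / ((n : ℝ) + 1 + (s + 1 : ℕ))
        = (1 / ((n : ℝ) + 1) - 1 / ((n : ℝ) + 1 + s))
          + (1 / ((n : ℝ) + 1 + s) - 1 / ((n : ℝ) + 1 + (s + 1))) := by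
      intro n; push_cast; ring
    calc ∑' n : ℕ, (1 / ((n : ℝ) + 1) - 1 / ((n : ℝ) + 1 + (s + 1 : ℕ)))
        = ∑' n : ℕ, ((1 / ((n : ℝ) + 1) - 1 / ((n : ℝ) + 1 + s))
          + (1 / ((n : ℝ) + 1 + s) - 1 / ((n : ℝ) + 1 + (s + 1)))) := tsum_congr heq
      _ = H s + 1 / ((s : ℝ) + 1) := by
          rw [Summable.tsum_add (summable_diff s) (summable_tele s), ih, tele_eval]
      _ = H (s + 1) := (H_succ s).symm
lemma abel_id (m s : ℕ) : ∀ N : ℕ,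
    ∑ n ∈ Finset.range N, zh m (n + 1) / (((n : ℝ) + 1 + s) * ((n : ℝ) + 2 + s))
      = ∑ n ∈ Finset.range N, 1 / (((n : ℝ) + 1) ^ m * ((n : ℝ) + 1 + s))
        - zh m N / ((N : ℝ) + 1 + s) := by
  intro N
  induction N with
  | zero => simp [zh_zero]
  | succ N ih =>
    rw [Finset.sum_range_succ, Finset.sum_range_succ, ih, zh_succ]
    have h1 : (0:ℝ) < (N : ℝ) + 1 + s := by positivity
    have h2 : (0:ℝ) < (N : ℝ) + 2 + s := by positivity
    have h3 : (0:ℝ) < ((N : ℝ) + 1) ^ m := by positivity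
    push_cast
    field_simp
    ring

lemma sum_g_nonneg (m : ℕ) (s : ℝ) (hs : 0 ≤ s) (n : ℕ) :
    (0:ℝ) ≤ 1 / (((n : ℝ) + 1) ^ m * ((n : ℝ) + 1 + s)) := by positivity

lemma summable_f (m s : ℕ) (hm : 1 ≤ m) (hs : 1 ≤ s) :
    Summable (fun n : ℕ => zh m (n + 1) / (((n : ℝ) + 1 + s) * ((n : ℝ) + 2 + s))) := by
  have hs' : (1:ℝ) ≤ s := by exact_mod_cast hs
  have hg := summable_g m s hm hs'
  apply summable_of_sum_range_le (c := ∑' n : ℕ, 1 / (((n : ℝ) + 1) ^ m * ((n : ℝ) + 1 + s)))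
  · intro n
    have := zh_nonneg m (n + 1)
    positivity
  · intro N
    rw [abel_id]
    have hR : 0 ≤ zh m N / ((N : ℝ) + 1 + s) := by
      have := zh_nonneg m N
      positivity
    have hP : ∑ n ∈ Finset.range N, 1 / (((n : ℝ) + 1) ^ m * ((n : ℝ) + 1 + s))
        ≤ ∑' n : ℕ, 1 / (((n : ℝ) + 1) ^ m * ((n : ℝ) + 1 + s)) :=
      Summable.sum_le_tsum _ (fun i _ => by positivity) hg
    linarith

lemma sqrt_tendsto_atTop : Tendsto Real.sqrt atTop atTop := by
  apply Filter.tendsto_atTop_atTop.2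
  intro b
  refine ⟨b ^ 2, fun a ha => ?_⟩
  calc b ≤ |b| := le_abs_self b
    _ = Real.sqrt (b ^ 2) := (Real.sqrt_sq_eq_abs b).symm
    _ ≤ Real.sqrt a := Real.sqrt_le_sqrt ha

lemma rem_tendsto (m s : ℕ) (hm : 1 ≤ m) :
    Tendsto (fun N : ℕ => zh m N / ((N : ℝ) + 1 + s)) atTop (nhds 0) := by
  have hb : Tendsto (fun N : ℕ => 2 / Real.sqrt ((N : ℝ) + 1)) atTop (nhds 0) := by
    have h1 : Tendsto (fun N : ℕ => Real.sqrt ((N : ℝ) + 1)) atTop atTop :=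
      sqrt_tendsto_atTop.comp (tendsto_atTop_add_const_right _ 1 tendsto_natCast_atTop_atTop)
    simpa [div_eq_mul_inv] using h1.inv_tendsto_atTop.const_mul (2:ℝ)
  apply squeeze_zero (fun N => div_nonneg (zh_nonneg m N) (by positivity)) _ hb
  intro N
  have hss : (0:ℝ) ≤ s := Nat.cast_nonneg s
  have hN1 : (0:ℝ) < (N : ℝ) + 1 := by positivity
  have hsq : (0:ℝ) < Real.sqrt ((N:ℝ) + 1) := Real.sqrt_pos.2 hN1
  have h1 : zh m N ≤ 2 * Real.sqrt ((N:ℝ) + 1) := by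
    refine (zh_le_sqrt m hm N).trans ?_
    have := Real.sqrt_le_sqrt (show (N:ℝ) ≤ (N:ℝ) + 1 by linarith)
    linarith
  calc zh m N / ((N : ℝ) + 1 + s) ≤ 2 * Real.sqrt ((N:ℝ) + 1) / ((N : ℝ) + 1 + s) :=
        div_le_div_of_nonneg_right h1 (by positivity)
    _ ≤ 2 * Real.sqrt ((N:ℝ) + 1) / ((N : ℝ) + 1) := by
        apply div_le_div_of_nonneg_left (by positivity) hN1 (by linarith)
    _ = 2 / Real.sqrt ((N:ℝ) + 1) := by
        have ha : Real.sqrt ((N:ℝ)+1) * Real.sqrt ((N:ℝ)+1) = (N:ℝ)+1 :=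
          Real.mul_self_sqrt hN1.le
        field_simp
        linarith [ha]

lemma core1 (m s : ℕ) (hm : 1 ≤ m) (hs : 1 ≤ s) :
    ∑' n : ℕ, zh m (n + 1) / (((n : ℝ) + 1 + s) * ((n : ℝ) + 2 + s))
      = ∑' n : ℕ, 1 / (((n : ℝ) + 1) ^ m * ((n : ℝ) + 1 + s)) := by
  have hs' : (1:ℝ) ≤ s := by exact_mod_cast hs
  have hg := summable_g m s hm hs'
  have hf := summable_f m s hm hs
  have hA := hf.hasSum.tendsto_sum_nat
  have hB : Tendsto
      (fun N => ∑ n ∈ Finset.range N, zh m (n + 1) / (((n : ℝ) + 1 + s) * ((n : ℝ) + 2 + s)))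
      atTop (nhds (∑' n : ℕ, 1 / (((n : ℝ) + 1) ^ m * ((n : ℝ) + 1 + s)))) := by
    have := (hg.hasSum.tendsto_sum_nat).sub (rem_tendsto m s hm)
    rw [sub_zero] at this
    exact this.congr (fun N => (abel_id m s N).symm)
  exact tendsto_nhds_unique hA hB
lemma pf' (x t : ℝ) (hx : 0 < x) (ht : 0 < t) : ∀ m : ℕ,
    1 / (x ^ (m + 1) * (x + t)) =
      (∑ j ∈ Finset.range m, (-1 : ℝ) ^ j / t ^ (j + 1) * (1 / x ^ (m + 1 - j)))
        + (-1 : ℝ) ^ m / t ^ (m + 1) * (1 / x - 1 / (x + t)) := by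
  intro m
  induction m with
  | zero =>
    simp only [Finset.range_zero, Finset.sum_empty, pow_one, pow_zero, zero_add]
    field_simp
    ring
  | succ m ih =>
    have key : 1 / (x ^ (m + 1 + 1) * (x + t))
        = 1 / (t * x ^ (m + 1 + 1)) - 1 / t * (1 / (x ^ (m + 1) * (x + t))) := by
      field_simp
      ring
    rw [key, ih,
      Finset.sum_range_succ' (fun j => (-1 : ℝ) ^ j / t ^ (j + 1) * (1 / x ^ (m + 1 + 1 - j))) m]
    have hr : ∀ j : ℕ, j ∈ Finset.range m →
        (-1 : ℝ) ^ (j + 1) / t ^ (j + 1 + 1) * (1 / x ^ (m + 1 + 1 - (j + 1)))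
          = -(1 / t * ((-1 : ℝ) ^ j / t ^ (j + 1) * (1 / x ^ (m + 1 - j)))) := by
      intro j _
      have h2 : m + 1 + 1 - (j + 1) = m + 1 - j := by omega
      rw [h2, pow_succ, pow_succ]
      field_simp
    rw [Finset.sum_congr rfl hr, Finset.sum_neg_distrib]
    have htr : ((-1 : ℝ) ^ (m + 1) / t ^ (m + 1 + 1)) = -(1 / t * ((-1 : ℝ) ^ m / t ^ (m + 1))) := by
      rw [pow_succ, pow_succ]
      field_simp
    rw [htr]
    simp only [pow_zero, Nat.sub_zero]
    rw [mul_add, Finset.mul_sum]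
    ring

lemma core2 (m s : ℕ) (hs : 1 ≤ s) :
    ∑' n : ℕ, 1 / (((n : ℝ) + 1) ^ (m + 1) * ((n : ℝ) + 1 + s))
      = (∑ j ∈ Finset.range m, (-1 : ℝ) ^ j / (s : ℝ) ^ (j + 1) * Z (m + 1 - j))
        + (-1 : ℝ) ^ m / (s : ℝ) ^ (m + 1) * H s := by
  have hsp : (0:ℝ) < s := by exact_mod_cast hs
  have hA : ∀ j ∈ Finset.range m, Summable
      (fun n : ℕ => (-1 : ℝ) ^ j / (s : ℝ) ^ (j + 1) * (1 / ((n : ℝ) + 1) ^ (m + 1 - j))) := by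
    intro j hj
    exact (summable_pow (m + 1 - j) (by simp at hj; omega)).mul_left _
  have hAs : Summable (fun n : ℕ => ∑ j ∈ Finset.range m,
      (-1 : ℝ) ^ j / (s : ℝ) ^ (j + 1) * (1 / ((n : ℝ) + 1) ^ (m + 1 - j))) :=
    summable_sum hA
  have hB : Summable (fun n : ℕ =>
      (-1 : ℝ) ^ m / (s : ℝ) ^ (m + 1) * (1 / ((n : ℝ) + 1) - 1 / ((n : ℝ) + 1 + s))) :=
    (summable_diff s).mul_left _
  calc ∑' n : ℕ, 1 / (((n : ℝ) + 1) ^ (m + 1) * ((n : ℝ) + 1 + s))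
      = ∑' n : ℕ, ((∑ j ∈ Finset.range m,
            (-1 : ℝ) ^ j / (s : ℝ) ^ (j + 1) * (1 / ((n : ℝ) + 1) ^ (m + 1 - j)))
          + (-1 : ℝ) ^ m / (s : ℝ) ^ (m + 1) * (1 / ((n : ℝ) + 1) - 1 / ((n : ℝ) + 1 + s))) := by
        apply tsum_congr
        intro n
        exact pf' ((n : ℝ) + 1) (s : ℝ) (by positivity) hsp m
    _ = (∑ j ∈ Finset.range m, (-1 : ℝ) ^ j / (s : ℝ) ^ (j + 1) * Z (m + 1 - j))
        + (-1 : ℝ) ^ m / (s : ℝ) ^ (m + 1) * H s := by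
        rw [Summable.tsum_add hAs hB, Summable.tsum_finsetSum hA]
        congr 1
        · apply Finset.sum_congr rfl
          intro j hj
          rw [tsum_mul_left]
          rfl
        · rw [tsum_mul_left, tsum_diff_H]

lemma core (m s : ℕ) (hm : 1 ≤ m) (hs : 1 ≤ s) :
    ∑' n : ℕ, zh m (n + 1) / (((n : ℝ) + 1 + s) * ((n : ℝ) + 2 + s))
      = (∑ j ∈ Finset.Icc 1 (m - 1), (-1 : ℝ) ^ (j - 1) * Z (m + 1 - j) / (s : ℝ) ^ j)
        + (-1 : ℝ) ^ (m - 1) * H s / (s : ℝ) ^ m := by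
  obtain ⟨m', rfl⟩ : ∃ m', m = m' + 1 := ⟨m - 1, by omega⟩
  rw [core1 _ _ hm hs, core2 m' s hs]
  congr 1
  · rw [show m' + 1 - 1 = m' by omega, ← Finset.Ico_add_one_right_eq_Icc, Finset.sum_Ico_eq_sum_range,
      show m' + 1 - 1 = m' by omega]
    symm
    apply Finset.sum_congr rfl
    intro j hj
    have h1 : 1 + j - 1 = j := by omega
    have h2 : m' + 1 + 1 - (1 + j) = m' + 1 - j := by omega
    rw [h1, h2]
    ring
  · simp only [Nat.add_sub_cancel]
    ring

lemma sum_range_eq_Icc (f : ℕ → ℝ) (h0 : f 0 = 0) (t : ℕ) :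
    ∑ i ∈ Finset.range (t + 1), f i = ∑ i ∈ Finset.Icc 1 t, f i := by
  induction t with
  | zero => simp [h0]
  | succ t ih => rw [Finset.sum_range_succ, ih, Finset.sum_Icc_succ_top (by omega)]

theorem stmt6 (m r k : ℕ) (hm : 1 ≤ m) (hr : 1 ≤ r) (hrk : r < k) :
    ∑' n : ℕ, zh m (n + 1) / (((n : ℝ) + 1 + r) * ((n : ℝ) + 1 + k)) =
      (1 / ((k : ℝ) - r)) *
        (∑ j ∈ Finset.Icc 1 (m - 1),
            (-1 : ℝ) ^ (j - 1) * Z (m + 1 - j) * (zh j (k - 1) - zh j (r - 1)) +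
          (-1 : ℝ) ^ (m - 1) *
            (∑ i ∈ Finset.Icc 1 (k - 1), H i / (i : ℝ) ^ m -
              ∑ i ∈ Finset.Icc 1 (r - 1), H i / (i : ℝ) ^ m)) := by
  have hkr : (0:ℝ) < (k : ℝ) - r := by
    have : (r:ℝ) < k := by exact_mod_cast hrk
    linarith
  -- pointwise identity
  have hpt : ∀ n : ℕ, zh m (n + 1) / (((n : ℝ) + 1 + r) * ((n : ℝ) + 1 + k))
      = (1 / ((k : ℝ) - r)) *
          ∑ s ∈ Finset.Ico r k, zh m (n + 1) / (((n : ℝ) + 1 + s) * ((n : ℝ) + 2 + s)) := by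
    intro n
    set x : ℝ := (n : ℝ) + 1 with hx
    have hxpos : (0:ℝ) < x := by positivity
    have tele : ∑ s ∈ Finset.Ico r k, (1 / (x + s) - 1 / (x + 1 + s))
        = 1 / (x + r) - 1 / (x + k) := by
      rw [Finset.sum_Ico_eq_sum_range]
      have hcongr : ∀ i ∈ Finset.range (k - r),
          (1 / (x + (r + i : ℕ)) - 1 / (x + 1 + (r + i : ℕ)))
            = (fun i : ℕ => 1 / (x + r + i)) i - (fun i : ℕ => 1 / (x + r + i)) (i + 1) := by
        intro i _
        push_cast
        ring_nf
      rw [Finset.sum_congr rfl hcongr, Finset.sum_range_sub']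
      have : ((k - r : ℕ) : ℝ) = (k : ℝ) - r := by
        push_cast [Nat.cast_sub hrk.le]
        ring
      rw [this]
      push_cast
      ring_nf
    have each : ∀ s ∈ Finset.Ico r k,
        zh m (n + 1) / ((x + s) * (x + 1 + s))
          = zh m (n + 1) * (1 / (x + s) - 1 / (x + 1 + s)) := by
      intro s _
      have h1 : (0:ℝ) < x + s := by positivity
      have h2 : (0:ℝ) < x + 1 + s := by positivity
      rw [mul_sub, mul_one_div, mul_one_div, div_sub_div _ _ h1.ne' h2.ne',
        div_eq_div_iff (by positivity) (by positivity)]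
      ring
    have hsum : ∑ s ∈ Finset.Ico r k, zh m (n + 1) / ((x + s) * (x + 1 + s))
        = zh m (n + 1) * (1 / (x + r) - 1 / (x + k)) := by
      rw [Finset.sum_congr rfl each, ← Finset.mul_sum, tele]
    have hshape : ∀ s : ℕ, (x + s) * (x + 1 + s) = ((n : ℝ) + 1 + s) * ((n : ℝ) + 2 + s) := by
      intro s
      rw [hx]
      ring
    calc zh m (n + 1) / ((x + r) * (x + k))
        = (1 / ((k : ℝ) - r)) * (zh m (n + 1) * (1 / (x + r) - 1 / (x + k))) := by
          have h1 : (0:ℝ) < x + r := by positivity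
          have h2 : (0:ℝ) < x + k := by positivity
          have hd : 1 / (x + (r:ℝ)) - 1 / (x + (k:ℝ))
              = ((k:ℝ) - r) / ((x + r) * (x + k)) := by
            rw [div_sub_div _ _ h1.ne' h2.ne',
              div_eq_div_iff (by positivity) (by positivity)]
            ring
          have h3 : ((k:ℝ) - r) ≠ 0 := hkr.ne'
          rw [hd]
          field_simp
          try ring
      _ = (1 / ((k : ℝ) - r)) *
          ∑ s ∈ Finset.Ico r k, zh m (n + 1) / (((n : ℝ) + 1 + s) * ((n : ℝ) + 2 + s)) := by
          rw [← hsum]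
          congr 1
          apply Finset.sum_congr rfl
          intro s _
          rw [hshape]
  have hFs : ∀ s ∈ Finset.Ico r k,
      Summable (fun n : ℕ => zh m (n + 1) / (((n : ℝ) + 1 + s) * ((n : ℝ) + 2 + s))) := by
    intro s hs
    exact summable_f m s hm (le_trans hr (Finset.mem_Ico.1 hs).1)
  calc ∑' n : ℕ, zh m (n + 1) / (((n : ℝ) + 1 + r) * ((n : ℝ) + 1 + k))
      = ∑' n : ℕ, (1 / ((k : ℝ) - r)) *
          ∑ s ∈ Finset.Ico r k, zh m (n + 1) / (((n : ℝ) + 1 + s) * ((n : ℝ) + 2 + s)) :=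
        tsum_congr hpt
    _ = (1 / ((k : ℝ) - r)) * ∑ s ∈ Finset.Ico r k,
          ∑' n : ℕ, zh m (n + 1) / (((n : ℝ) + 1 + s) * ((n : ℝ) + 2 + s)) := by
        rw [tsum_mul_left, Summable.tsum_finsetSum hFs]
    _ = (1 / ((k : ℝ) - r)) * ∑ s ∈ Finset.Ico r k,
          ((∑ j ∈ Finset.Icc 1 (m - 1), (-1 : ℝ) ^ (j - 1) * Z (m + 1 - j) / (s : ℝ) ^ j)
            + (-1 : ℝ) ^ (m - 1) * H s / (s : ℝ) ^ m) := by
        congr 1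
        apply Finset.sum_congr rfl
        intro s hs
        exact core m s hm (le_trans hr (Finset.mem_Ico.1 hs).1)
    _ = (1 / ((k : ℝ) - r)) *
        (∑ j ∈ Finset.Icc 1 (m - 1),
            (-1 : ℝ) ^ (j - 1) * Z (m + 1 - j) * (zh j (k - 1) - zh j (r - 1)) +
          (-1 : ℝ) ^ (m - 1) *
            (∑ i ∈ Finset.Icc 1 (k - 1), H i / (i : ℝ) ^ m -
              ∑ i ∈ Finset.Icc 1 (r - 1), H i / (i : ℝ) ^ m)) := by
        congr 1
        rw [Finset.sum_add_distrib]
        congr 1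
        · rw [Finset.sum_comm]
          apply Finset.sum_congr rfl
          intro j hj
          have hj1 : 1 ≤ j := (Finset.mem_Icc.1 hj).1
          have hzero : (fun i : ℕ => (1:ℝ) / (i : ℝ) ^ j) 0 = 0 := by
            simp [zero_pow (by omega : j ≠ 0)]
          have hIco : ∑ s ∈ Finset.Ico r k, (1:ℝ) / (s : ℝ) ^ j
              = zh j (k - 1) - zh j (r - 1) := by
            have hk' := sum_range_eq_Icc (fun i : ℕ => (1:ℝ) / (i : ℝ) ^ j) hzero (k - 1)
            have hr' := sum_range_eq_Icc (fun i : ℕ => (1:ℝ) / (i : ℝ) ^ j) hzero (r - 1)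
            rw [show k - 1 + 1 = k from by omega] at hk'
            rw [show r - 1 + 1 = r from by omega] at hr'
            rw [Finset.sum_Ico_eq_sub _ hrk.le, hk', hr']
            rfl
          rw [← hIco, Finset.mul_sum]
          apply Finset.sum_congr rfl
          intro s _
          rw [mul_one_div]
        · have hzero : (fun i : ℕ => H i / (i : ℝ) ^ m) 0 = 0 := by
            simp [H]
          have hIco : ∑ s ∈ Finset.Ico r k, H s / (s : ℝ) ^ m
              = ∑ i ∈ Finset.Icc 1 (k - 1), H i / (i : ℝ) ^ m -
                ∑ i ∈ Finset.Icc 1 (r - 1), H i / (i : ℝ) ^ m := by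
            have hk' := sum_range_eq_Icc (fun i : ℕ => H i / (i : ℝ) ^ m) hzero (k - 1)
            have hr' := sum_range_eq_Icc (fun i : ℕ => H i / (i : ℝ) ^ m) hzero (r - 1)
            rw [show k - 1 + 1 = k from by omega] at hk'
            rw [show r - 1 + 1 = r from by omega] at hr'
            rw [Finset.sum_Ico_eq_sub _ hrk.le, hk', hr']
          rw [← hIco, Finset.mul_sum]
          apply Finset.sum_congr rfl
          intro s _
          ring
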